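/- Let R be a ring and A a left R-module. The map ε sending a natural transformation α : (A,-)-underline ⟶ Hom(R,-) to the element f_α(1) ∈ A, where f_α : R → A is the R-linear map corresponding under the Yoneda lemma to the composite α ∘ π : Hom(A,-) ⟶ Hom(R,-), is a well-defined isomorphism of abelian groups from Nat((A,-)-underline, Hom(R,-)) onto the Bass torsion t(A), and this isomorphism is natural in A. -/

import Mathlib

open CategoryTheory Opposite
universe u
variable {R : Type u} [Ring R]

theorem projective_prod {M N : Type u} [AddCommGroup M] [AddCommGroup N] [Module R M]
    [Module R N] (hM : Module.Projective R M) (hN : Module.Projective R N) :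
    Module.Projective R (M × N) := by
  rw [Module.projective_def] at hM hN
  obtain ⟨sM, hsM⟩ := hM
  obtain ⟨sN, hsN⟩ := hN
  exact Module.Projective.of_split (M := (M →₀ R) × (N →₀ R))
    (LinearMap.prodMap sM sN)
    (LinearMap.prodMap (Finsupp.linearCombination R id) (Finsupp.linearCombination R id))
    (by ext x <;> simp [hsM _, hsN _])

/-- Bass torsion. -/
def bassTorsion (R : Type u) [Ring R] (M : Type u) [AddCommGroup M] [Module R M] :
    Submodule R M where
  carrier := {a | ∀ h : M →ₗ[R] R, h a = 0}
  zero_mem' := by intro h; simp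
  add_mem' := by intro a b ha hb h; simp [map_add, ha h, hb h]
  smul_mem' := by intro r a ha h; rw [map_smul]; simp [ha h]

/-- A homomorphism factors through a projective module. -/
def FactorsThroughProjective {A M : ModuleCat.{u} R} (g : A ⟶ M) : Prop :=
  ∃ (P : ModuleCat.{u} R) (p : A ⟶ P) (q : P ⟶ M), Module.Projective R P ∧ p ≫ q = g

/-- The subgroup of maps factoring through a projective. -/
def projSub (A M : ModuleCat.{u} R) : AddSubgroup (A ⟶ M) where
  carrier := {g | FactorsThroughProjective g}
  zero_mem' := ⟨ModuleCat.of R PUnit, 0, 0, inferInstance, by simp⟩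
  add_mem' := by
    rintro g₁ g₂ ⟨P₁, p₁, q₁, hP₁, h₁⟩ ⟨P₂, p₂, q₂, hP₂, h₂⟩
    refine ⟨ModuleCat.of R (P₁ × P₂), ModuleCat.ofHom (LinearMap.prod p₁.hom p₂.hom),
      ModuleCat.ofHom (q₁.hom ∘ₗ LinearMap.fst R P₁ P₂ + q₂.hom ∘ₗ LinearMap.snd R P₁ P₂),
      projective_prod hP₁ hP₂, ?_⟩
    subst h₁ h₂
    ext a
    rfl
  neg_mem' := by
    rintro g ⟨P, p, q, hP, h⟩
    exact ⟨P, p, -q, hP, by rw [← h]; simp⟩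

def postcompHom {A M N : ModuleCat.{u} R} (f : M ⟶ N) :
    (A ⟶ M) →+ (A ⟶ N) :=
  AddMonoidHom.mk' (fun g => g ≫ f) (fun g₁ g₂ => by simp [Preadditive.add_comp])

/-- The stable Hom functor Hom(A,-) modulo projectives. -/
def stableHomFunctor (A : ModuleCat.{u} R) : ModuleCat.{u} R ⥤ AddCommGrpCat.{u} where
  obj M := AddCommGrpCat.of ((A ⟶ M) ⧸ projSub A M)
  map {M N} f := AddCommGrpCat.ofHom (QuotientAddGroup.map _ _ (postcompHom f)
    (by rintro g ⟨P, p, q, hP, h⟩; exact ⟨P, p, q ≫ f, hP, by rw [← h]; simp [postcompHom]⟩))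
  map_id M := by
    ext x
    simp [postcompHom]
  map_comp {M N K} f g := by
    ext x
    simp [postcompHom]

/-- The forgetful functor `Hom(R,-)`. -/
def forgetfulFunctor (R : Type u) [Ring R] : ModuleCat.{u} R ⥤ AddCommGrpCat.{u} :=
  preadditiveCoyoneda.obj (op (ModuleCat.of R R))

/-- An element of the value of the forgetful functor, viewed as a linear map `R → A`. -/
def toHom {A : ModuleCat.{u} R} (x : (forgetfulFunctor R).obj A) :
    ModuleCat.of R R ⟶ A := x

def precompHom {A B M : ModuleCat.{u} R} (f : A ⟶ B) :
    (B ⟶ M) →+ (A ⟶ M) :=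
  AddMonoidHom.mk' (fun g => f ≫ g) (fun g₁ g₂ => by simp [Preadditive.comp_add])

/-- Covariant functoriality (in the contravariant variable) of the stable Hom functor. -/
def stableHomPrecomp {A B : ModuleCat.{u} R} (f : A ⟶ B) :
    stableHomFunctor B ⟶ stableHomFunctor A where
  app M := AddCommGrpCat.ofHom (QuotientAddGroup.map _ _ (precompHom f)
    (by rintro g ⟨P, p, q, hP, h⟩
        exact ⟨P, f ≫ p, q, hP, by rw [← h]; simp [precompHom, Category.assoc]⟩))
  naturality {M N} u := by
    ext x
    induction x using QuotientAddGroup.induction_on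
    first
      | simp [stableHomFunctor, postcompHom, precompHom, Category.assoc]; done
      | rfl

lemma apply_eq_zero_of_mem_projSub {A M : ModuleCat.{u} R} {g : A ⟶ M}
    (hg : g ∈ projSub A M) {a : A} (ha : a ∈ bassTorsion R A) : g a = 0 := by
  obtain ⟨P, p, q, hP, h⟩ := hg
  rw [Module.projective_def] at hP
  obtain ⟨s, hs⟩ := hP
  have hpa : p a = 0 := by
    have h0 : s (p a) = 0 := by
      ext x
      exact ha (Finsupp.lapply x ∘ₗ s ∘ₗ p.hom)
    have h1 := hs (p a)
    rw [h0, map_zero] at h1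
    exact h1.symm
  have : g a = q (p a) := by rw [← h]; rfl
  rw [this, hpa, map_zero]

lemma alpha_app_mk {A M : ModuleCat.{u} R} (α : stableHomFunctor A ⟶ forgetfulFunctor R)
    (g : A ⟶ M) :
    α.app M (QuotientAddGroup.mk g) =
      toHom (α.app A (QuotientAddGroup.mk (𝟙 A))) ≫ g := by
  have hn := α.naturality g
  have h : α.app M ((stableHomFunctor A).map g (QuotientAddGroup.mk (𝟙 A))) =
      (forgetfulFunctor R).map g (α.app A (QuotientAddGroup.mk (𝟙 A))) :=
    ConcreteCategory.congr_hom hn _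
  have h1 : (stableHomFunctor A).map g (QuotientAddGroup.mk (𝟙 A)) =
      QuotientAddGroup.mk g := by
    show QuotientAddGroup.mk (postcompHom g (𝟙 A)) = _
    simp [postcompHom]
  rw [h1] at h
  exact h

/-- `ε` itself. -/
def epsMap (A : ModuleCat.{u} R) (α : stableHomFunctor A ⟶ forgetfulFunctor R) : A :=
  toHom (α.app A (QuotientAddGroup.mk (𝟙 A))) (1 : R)

lemma epsMap_mem (A : ModuleCat.{u} R) (α : stableHomFunctor A ⟶ forgetfulFunctor R) :
    epsMap A α ∈ bassTorsion R A := by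
  intro h
  let h' : A ⟶ ModuleCat.of R R := ModuleCat.ofHom h
  have hmem : h' ∈ projSub A (ModuleCat.of R R) :=
    ⟨ModuleCat.of R R, h', 𝟙 _, inferInstanceAs (Module.Projective R R), Category.comp_id _⟩
  have h0 : α.app (ModuleCat.of R R) (QuotientAddGroup.mk h') = 0 := by
    rw [show (QuotientAddGroup.mk h' : (stableHomFunctor A).obj (ModuleCat.of R R)) = 0 from
      (QuotientAddGroup.eq_zero_iff _).2 hmem]
    exact map_zero _
  rw [alpha_app_mk α h'] at h0
  have h2 := congrArg (fun k : ModuleCat.of R R ⟶ ModuleCat.of R R => k (1 : R)) h0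
  exact h2

lemma alpha_app_mk' {A M : ModuleCat.{u} R} (α : stableHomFunctor A ⟶ forgetfulFunctor R)
    (g : A ⟶ M) :
    α.app M (QuotientAddGroup.mk g) = ModuleCat.ofHom (LinearMap.toSpanSingleton R M (g (epsMap A α))) := by
  rw [alpha_app_mk α g]
  apply ModuleCat.hom_ext
  apply LinearMap.ext_ring
  rw [ModuleCat.hom_ofHom, LinearMap.toSpanSingleton_apply_one]
  rfl

/-- The inverse of `ε`, at each object. -/
def epsInvApp (A : ModuleCat.{u} R) (a : bassTorsion R A) (M : ModuleCat.{u} R) :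
    (stableHomFunctor A).obj M ⟶ (forgetfulFunctor R).obj M :=
  AddCommGrpCat.ofHom (QuotientAddGroup.lift _
    (AddMonoidHom.mk' (fun g : A ⟶ M => (ModuleCat.ofHom (LinearMap.toSpanSingleton R M (g (a : A))) :
        ModuleCat.of R R ⟶ M))
      (fun g₁ g₂ => by
        apply ModuleCat.hom_ext
        apply LinearMap.ext_ring
        show (1 : R) • ((g₁ + g₂) (a : A)) = (1 : R) • g₁ (a : A) + (1 : R) • g₂ (a : A)
        rw [one_smul, one_smul, one_smul]
        rfl))
    (fun g hg => by
      apply ModuleCat.hom_ext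
      apply LinearMap.ext_ring
      show (1 : R) • g (a : A) = (0 : ↥M)
      rw [apply_eq_zero_of_mem_projSub hg a.2, smul_zero]))

lemma epsInvApp_mk (A : ModuleCat.{u} R) (a : bassTorsion R A) (M : ModuleCat.{u} R)
    (g : A ⟶ M) :
    epsInvApp A a M (QuotientAddGroup.mk g) = ModuleCat.ofHom (LinearMap.toSpanSingleton R M (g (a : A))) :=
  rfl

/-- The inverse of `ε`. -/
def epsInv (A : ModuleCat.{u} R) (a : bassTorsion R A) :
    stableHomFunctor A ⟶ forgetfulFunctor R where
  app M := epsInvApp A a M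
  naturality {M N} u := by
    ext x
    induction x using QuotientAddGroup.induction_on with
    | H g =>
      show epsInvApp A a N ((stableHomFunctor A).map u (QuotientAddGroup.mk g)) =
        (forgetfulFunctor R).map u (epsInvApp A a M (QuotientAddGroup.mk g))
      have h1 : (stableHomFunctor A).map u (QuotientAddGroup.mk g) =
          QuotientAddGroup.mk (g ≫ u) := rfl
      rw [h1, epsInvApp_mk, epsInvApp_mk]
      apply ModuleCat.hom_ext
      apply LinearMap.ext_ring
      show (1 : R) • ((g ≫ u) (a : A)) = u ((1 : R) • g (a : A))
      rw [one_smul, one_smul]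
      rfl

/-- the map `ε` sending a natural transformation
`α : (A,-)-underline ⟶ Hom(R,-)` to `f_α(1)`, where `f_α` corresponds to `α ∘ π`
under the Yoneda lemma (i.e. `f_α = (α ∘ π)_A(id_A)`), is a well-defined
isomorphism of abelian groups onto the Bass torsion `t(A)`, naturally in `A`. -/
theorem statement0 (R : Type u) [Ring R] :
    ∃ e : (A : ModuleCat.{u} R) →
        ((stableHomFunctor A ⟶ forgetfulFunctor R) ≃+ bassTorsion R A),
      (∀ (A : ModuleCat.{u} R) (α : stableHomFunctor A ⟶ forgetfulFunctor R),
          ((e A α : bassTorsion R A) : A) =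
            toHom (α.app A ((QuotientAddGroup.mk (𝟙 A)) : (A ⟶ A) ⧸ projSub A A))
              (1 : R)) ∧
      (∀ (A B : ModuleCat.{u} R) (f : A ⟶ B)
          (α : stableHomFunctor A ⟶ forgetfulFunctor R),
          ((e B (stableHomPrecomp f ≫ α) : bassTorsion R B) : B) =
            f ((e A α : bassTorsion R A) : A)) := by
  refine ⟨fun A =>
    { toFun := fun α => ⟨epsMap A α, epsMap_mem A α⟩
      invFun := fun a => epsInv A a
      left_inv := fun α => by
        ext M x
        induction x using QuotientAddGroup.induction_on with
        | H g =>
          show epsInvApp A _ M (QuotientAddGroup.mk g) = α.app M (QuotientAddGroup.mk g)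
          rw [epsInvApp_mk, alpha_app_mk' α g]
      right_inv := fun a => by
        apply Subtype.ext
        show epsMap A (epsInv A a) = (a : A)
        show toHom (epsInvApp A a A (QuotientAddGroup.mk (𝟙 A))) (1 : R) = (a : A)
        rw [epsInvApp_mk]
        show (1 : R) • ((𝟙 A : A ⟶ A) (a : A)) = (a : A)
        rw [one_smul]
        rfl
      map_add' := fun α β => by
        apply Subtype.ext
        show epsMap A (α + β) = epsMap A α + epsMap A β
        unfold epsMap
        rw [NatTrans.app_add]
        rfl }, ?_, ?_⟩
  · intro A α
    rfl
  · intro A B f α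
    show epsMap B (stableHomPrecomp f ≫ α) = f (epsMap A α)
    unfold epsMap
    have h1 : (stableHomPrecomp f ≫ α).app B (QuotientAddGroup.mk (𝟙 B)) =
        α.app B (QuotientAddGroup.mk f) := by
      show α.app B ((stableHomPrecomp f).app B (QuotientAddGroup.mk (𝟙 B))) = _
      have h2 : (stableHomPrecomp f).app B (QuotientAddGroup.mk (𝟙 B)) =
          QuotientAddGroup.mk f := by
        show QuotientAddGroup.mk (precompHom f (𝟙 B)) = _
        simp [precompHom]
      rw [h2]
    rw [h1, alpha_app_mk' α f]
    show (1 : R) • f (epsMap A α) = f (epsMap A α)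
    rw [one_smul]
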